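/- Let V be a k-dimensional complex vector space, n > k, and l_1, …, l_n ∈ V* linear functionals such that every k of them are linearly independent. Define L : V → ℂ^n by L(v) = (l_1(v), …, l_n(v)); L is injective. Let W = ℂ^n / L(V), let q : ℂ^n → W be the quotient map, and let m_i = q(e_i) be the images of the standard basis vectors (the Gale transform of l_1, …, l_n). For K ⊆ {1, …, n} with |K| = k + 1 let D_K = {c ∈ ℂ^n : there exists v ∈ V with l_i(v) = c_i for all i ∈ K}. Then for every such K, D_K = q^{-1}(span{m_i : i ∈ {1, …, n} ∖ K}), and span{m_i : i ∉ K} is a linear hyperplane in W. (Thus the essential part of the discriminantal arrangement consists of the hyperplanes in W spanned by the (n − k − 1)-element subsets of the Gale transform.) -/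

import Mathlib

open Module Submodule

/-- The subspace `D_J ⊆ ℂ^ι` of translation vectors `x` for which the translated
hyperplanes `{l i = x i}`, `i ∈ J`, have a common point. -/
noncomputable def DD {ι V : Type*} [AddCommGroup V] [Module ℂ V]
    (l : ι → Module.Dual ℂ V) (J : Finset ι) : Submodule ℂ (ι → ℂ) where
  carrier := {x | ∃ y : V, ∀ i ∈ J, x i = l i y}
  add_mem' := by
    rintro a b ⟨y, hy⟩ ⟨z, hz⟩
    exact ⟨y + z, fun i hi => by simp [hy i hi, hz i hi]⟩
  zero_mem' := ⟨0, fun i _ => by simp⟩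
  smul_mem' := by
    rintro c a ⟨y, hy⟩
    exact ⟨c • y, fun i hi => by simp [hy i hi]⟩

theorem stmt18 (k n : ℕ) (hk : 0 < k) (hkn : k < n)
    (V : Type*) [AddCommGroup V] [Module ℂ V] [FiniteDimensional ℂ V]
    (hdim : Module.finrank ℂ V = k)
    (l : Fin n → Module.Dual ℂ V)
    (hgen : ∀ S : Finset (Fin n), S.card = k → LinearIndependent ℂ (fun i : S => l i.1))
    (L : V →ₗ[ℂ] (Fin n → ℂ)) (hL : L = LinearMap.pi l)
    (m : Fin n → (Fin n → ℂ) ⧸ LinearMap.range L)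
    (hm : m = fun i => Submodule.mkQ (LinearMap.range L) (Pi.single i 1)) :
    Function.Injective L ∧
    ∀ K : Finset (Fin n), K.card = k + 1 →
      DD l K = Submodule.comap (Submodule.mkQ (LinearMap.range L))
          (Submodule.span ℂ (m '' {i | i ∉ K})) ∧
      Module.finrank ℂ ↥(Submodule.span ℂ (m '' {i | i ∉ K})) = n - k - 1 := by
  classical
  -- Key: if `k` of the functionals vanish at `y`, then `y = 0`.
  have key : ∀ S : Finset (Fin n), S.card = k → ∀ y : V, (∀ i ∈ S, l i y = 0) → y = 0 := by
    intro S hS y hy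
    have hli := hgen S hS
    have hne : Nonempty S := by
      rw [Finset.nonempty_coe_sort]
      exact Finset.card_pos.mp (by omega)
    have hcard : Fintype.card S = finrank ℂ (Module.Dual ℂ V) := by
      rw [Subspace.dual_finrank_eq, hdim, Fintype.card_coe, hS]
    have hspan := hli.span_eq_top_of_card_eq_finrank hcard
    rw [← Module.forall_dual_apply_eq_zero_iff ℂ y]
    intro φ
    have hφ : φ ∈ Submodule.span ℂ (Set.range fun i : S => l i.1) := hspan ▸ Submodule.mem_top
    induction hφ using Submodule.span_induction with
    | mem x hx => obtain ⟨i, rfl⟩ := hx; exact hy i.1 i.2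
    | zero => simp
    | add x z _ _ hx hz => simp [hx, hz]
    | smul c x _ hx => simp [hx]
  -- a k-subset of any (≥ k)-card finset
  have hinj : Function.Injective L := by
    rw [← LinearMap.ker_eq_bot]
    apply (Submodule.eq_bot_iff _).mpr
    intro y hy
    obtain ⟨S, _, hS⟩ := Finset.exists_subset_card_eq (s := (Finset.univ : Finset (Fin n))) (n := k)
      (by simp [Finset.card_univ]; omega)
    refine key S hS y fun i _ => ?_
    have : L y = 0 := hy
    rw [hL] at this
    exact congrFun this i
  refine ⟨hinj, fun K hK => ?_⟩
  set e : Fin n → (Fin n → ℂ) := fun i => Pi.single i 1 with he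
  set q := Submodule.mkQ (LinearMap.range L) with hq
  -- the span of the standard basis vectors off K
  set P := Submodule.span ℂ (e '' {i | i ∉ K}) with hP
  -- P is exactly the coordinates vanishing on K
  have hPmem : ∀ z : Fin n → ℂ, z ∈ P ↔ ∀ i ∈ K, z i = 0 := by
    intro z
    constructor
    · intro hz
      induction hz using Submodule.span_induction with
      | mem x hx =>
        obtain ⟨j, hj, rfl⟩ := hx
        intro i hi
        have : i ≠ j := fun h => hj (h ▸ hi)
        simp [he, Pi.single_apply, this]
      | zero => simp
      | add x w _ _ hx hw => intro i hi; simp [hx i hi, hw i hi]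
      | smul c x _ hx => intro i hi; simp [hx i hi]
    · intro hz
      have hrepr : z = ∑ i ∈ Finset.univ.filter (· ∉ K), z i • e i := by
        funext j
        rw [Finset.sum_apply]
        simp only [Pi.smul_apply, he, Pi.single_apply, smul_eq_mul, mul_ite, mul_one, mul_zero]
        rw [Finset.sum_ite_eq _ j (fun i => z i)]
        by_cases hj : j ∈ K <;> simp [hj, hz j]
      rw [hrepr]
      exact Submodule.sum_mem _ fun i hi => Submodule.smul_mem _ _
        (Submodule.subset_span ⟨i, by simpa using hi, rfl⟩)
  -- rewrite span of m-image as image of P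
  have himg : Submodule.span ℂ (m '' {i | i ∉ K}) = Submodule.map q P := by
    have : m '' {i | i ∉ K} = q '' (e '' {i | i ∉ K}) := by
      rw [hm, ← Set.image_comp]; rfl
    rw [this, ← Submodule.span_image]
  -- the comap description
  have hcomap : Submodule.comap q (Submodule.span ℂ (m '' {i | i ∉ K})) =
      P ⊔ LinearMap.range L := by
    rw [himg, Submodule.comap_map_eq, Submodule.ker_mkQ]
  -- DD = P ⊔ range L
  have hDD : DD l K = P ⊔ LinearMap.range L := by
    ext x
    constructor
    · rintro ⟨y, hy⟩
      refine Submodule.mem_sup.mpr ⟨x - L y, ?_, L y, ⟨y, rfl⟩, by abel⟩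
      rw [hPmem]
      intro i hi
      have : L y i = l i y := by rw [hL]; rfl
      simp [this, hy i hi]
    · intro hx
      obtain ⟨z, hz, -, ⟨y, rfl⟩, rfl⟩ := Submodule.mem_sup.mp hx
      refine ⟨y, fun i hi => ?_⟩
      have hzi := (hPmem z).mp hz i hi
      have : L y i = l i y := by rw [hL]; rfl
      simp [hzi, this]
  -- P ⊓ range L = ⊥, so q is injective on P
  have hker : ∀ x : Fin n → ℂ, x ∈ P → x ∈ LinearMap.range L → x = 0 := by
    rintro x hx ⟨y, rfl⟩
    obtain ⟨S, hSK, hS⟩ := Finset.exists_subset_card_eq (s := K) (n := k) (by omega)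
    have hy0 : y = 0 := by
      refine key S hS y fun i hi => ?_
      have := (hPmem _).mp hx i (hSK hi)
      rw [hL] at this
      exact this
    rw [hy0, map_zero]
  -- finrank of P
  set t : Finset (Fin n → ℂ) := Kᶜ.image e with ht
  have hcoe : e '' {i | i ∉ K} = (t : Set (Fin n → ℂ)) := by
    rw [ht, Finset.coe_image, Finset.coe_compl]
    rfl
  have heinj : Function.Injective e := by
    intro i j hij
    by_contra hne
    have := congrFun hij i
    simp [he, Pi.single_apply, hne] at this
  have hindep : LinearIndependent ℂ (fun x : (t : Set (Fin n → ℂ)) => (x : Fin n → ℂ)) := by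
    rw [← hcoe]
    refine LinearIndepOn.id_image (v := e) ?_
    have hb : LinearIndependent ℂ e := by
      have := (Pi.basisFun ℂ (Fin n)).linearIndependent
      convert this using 1
      funext i
      simp [he]
    exact hb.comp _ Subtype.val_injective
  have htcard : t.card = n - k - 1 := by
    rw [ht, Finset.card_image_of_injective _ heinj, Finset.card_compl, Fintype.card_fin, hK]
    omega
  have hfinP : finrank ℂ P = n - k - 1 := by
    rw [hP, hcoe, finrank_span_finset_eq_card hindep, htcard]
  -- q injective on P: compose with subtype
  have hrank : finrank ℂ ↥(Submodule.span ℂ (m '' {i | i ∉ K})) = n - k - 1 := by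
    set f := q.comp P.subtype with hf
    have hfinj : Function.Injective f := by
      rw [← LinearMap.ker_eq_bot]
      apply (Submodule.eq_bot_iff _).mpr
      rintro ⟨x, hx⟩ hker'
      have hx0 : q x = 0 := hker'
      have : x ∈ LinearMap.range L := by
        rwa [← Submodule.ker_mkQ (LinearMap.range L), LinearMap.mem_ker]
      exact Subtype.ext (hker x hx this)
    have hrange : LinearMap.range f = Submodule.span ℂ (m '' {i | i ∉ K}) := by
      rw [himg, hf, LinearMap.range_comp, Submodule.range_subtype]
    rw [← hrange, LinearMap.finrank_range_of_inj hfinj, hfinP]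
  exact ⟨by rw [hDD, hcomap], hrank⟩
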